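/- Let L be a Lie algebra over a field K, δ ∈ K with δ ≠ 1, and φ : L → L a linear map satisfying φ([x,y]) = δ[x,φ(y)] for all x,y ∈ L. Then φ([[x,y],z]) = 0 for all x,y,z ∈ L; in particular, if L is perfect then φ = 0. -/

import Mathlib

/-- If `δ ≠ 1` and `φ ⁅x,y⁆ = δ • ⁅x, φ y⁆` for all `x y`, then `φ` vanishes on
`⁅⁅L,L⁆,L⁆`; in particular, if `L` is perfect then `φ = 0`. -/
theorem phi_vanishes_on_second_commutant (K L : Type*) [Field K] [LieRing L]
    [LieAlgebra K L] (δ : K) (hδ : δ ≠ 1) (φ : L →ₗ[K] L)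
    (hφ : ∀ x y : L, φ ⁅x, y⁆ = δ • ⁅x, φ y⁆) :
    (∀ x y z : L, φ ⁅⁅x, y⁆, z⁆ = 0) ∧
      (⁅(⊤ : LieIdeal K L), (⊤ : LieIdeal K L)⁆ = ⊤ → φ = 0) := by
  have key : ∀ x y z : L, φ ⁅⁅x, y⁆, z⁆ = 0 := by
    intro x y z
    have h1 : φ ⁅⁅x, y⁆, z⁆ = δ • ⁅⁅x, y⁆, φ z⁆ := hφ _ _
    have h2 : φ ⁅⁅x, y⁆, z⁆ = (δ * δ) • ⁅⁅x, y⁆, φ z⁆ := by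
      rw [lie_lie, map_sub, hφ, hφ, hφ, hφ]
      simp only [lie_smul, smul_smul, lie_lie, smul_sub]
    rcases eq_or_ne δ 0 with h0 | h0
    · rw [h1, h0, zero_smul]
    · have hA : ⁅⁅x, y⁆, φ z⁆ = 0 := by
        have heq : (δ - δ * δ) • ⁅⁅x, y⁆, φ z⁆ = 0 := by
          rw [sub_smul, ← h1, ← h2, sub_self]
        have hne : δ - δ * δ ≠ 0 := by
          have : δ * (1 - δ) ≠ 0 := mul_ne_zero h0 (sub_ne_zero.mpr (Ne.symm hδ))
          simpa [mul_sub] using this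
        exact (smul_eq_zero.mp heq).resolve_left hne
      rw [h1, hA, smul_zero]
  refine ⟨key, fun hperf => ?_⟩
  have hspan : Submodule.span K
      {m : L | ∃ x ∈ (⊤ : LieIdeal K L), ∃ n ∈ (⊤ : LieIdeal K L), ⁅x, n⁆ = m}
      = ⊤ := by
    rw [← LieSubmodule.lieIdeal_oper_eq_linear_span', hperf,
      LieSubmodule.top_toSubmodule]
  -- φ kills every bracket, since every element lies in the span of brackets
  have stepA : ∀ a z : L, φ ⁅a, z⁆ = 0 := by
    intro a z
    have ha : a ∈ Submodule.span K
        {m : L | ∃ x ∈ (⊤ : LieIdeal K L), ∃ n ∈ (⊤ : LieIdeal K L), ⁅x, n⁆ = m} := by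
      rw [hspan]; trivial
    induction ha using Submodule.span_induction with
    | mem m hm =>
      obtain ⟨x, -, n, -, rfl⟩ := hm
      exact key x n z
    | zero => simp
    | add u v _ _ hu hv => rw [add_lie, map_add, hu, hv, add_zero]
    | smul c u _ hu => rw [smul_lie, map_smul, hu, smul_zero]
  ext w
  have hw : w ∈ Submodule.span K
      {m : L | ∃ x ∈ (⊤ : LieIdeal K L), ∃ n ∈ (⊤ : LieIdeal K L), ⁅x, n⁆ = m} := by
    rw [hspan]; trivial
  simp only [LinearMap.zero_apply]
  induction hw using Submodule.span_induction with
  | mem m hm =>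
    obtain ⟨x, -, n, -, rfl⟩ := hm
    exact stepA x n
  | zero => simp
  | add u v _ _ hu hv => rw [map_add, hu, hv, add_zero]
  | smul c u _ hu => rw [map_smul, hu, smul_zero]
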